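/- For all integers n ≥ 4, s ≥ 0, t ≥ 2 and i ≥ 0: if s ≤ t then p(n,s,t,i) − p(n,s+1,t−1,i) = Σ_{ℓ=0}^{s} p̿(n−2,0,ℓ,i); and if s ≥ t then p(n,s,t,i) − p(n,s+1,t−1,i) = Σ_{ℓ=0}^{t−1} p̿(n−2,0,ℓ,i) + (s−t+1)·p̿(n−2,0,t,i) + Σ_{ℓ=1}^{s−t} (s−t+1−ℓ)·[p̿(n−2,ℓ,t,i) − p̿(n−2,ℓ,t−1,i)], where p̿(n,s,t,i) = p(n,s,t,i) + 2·p(n,s,t,i−1) + p(n,s,t,i−2). -/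
import Mathlib


/-- Binomial coefficient with integer arguments: `0` unless `0 ≤ b ≤ a`. -/
def chooseZ (a b : ℤ) : ℕ := if 0 ≤ b ∧ b ≤ a then a.toNat.choose b.toNat else 0

/-- The positive part `p⁺(n,s,t,i) = Σ_{j=0}^{⌊i/2⌋} C(n, i-2j)·[C(n+s+t-1-i+j, n-1) -
C(n+s-1-i+j, n-1)]`. -/
def pPlus (n s t i : ℕ) : ℤ :=
  ∑ j ∈ Finset.range (i / 2 + 1),
    (chooseZ (n : ℤ) ((i : ℤ) - 2 * j) : ℤ) *
      ((chooseZ ((n : ℤ) + s + t - 1 - i + j) ((n : ℤ) - 1) : ℤ)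
        - (chooseZ ((n : ℤ) + s - 1 - i + j) ((n : ℤ) - 1) : ℤ))

/-- The negative part `p⁻(n,s,t,i)`, with `κ = ⌊n/2⌋`:
`Σ_{j=0}^{⌊(i-1)/2⌋} C(n, i-1-2j)·[C(s+t+κ-1-j, n-1) - C(s+κ-1-j, n-1)]` for `n` odd, and
`Σ_{j=0}^{⌊i/2⌋} C(n, i-2j)·[C(s+t+κ-1-j, n-1) - C(s+κ-1-j, n-1)]` for `n` even. -/
def pMinus (n s t i : ℕ) : ℤ :=
  if Odd n then
    ∑ j ∈ Finset.range ((i + 1) / 2),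
      (chooseZ (n : ℤ) ((i : ℤ) - 1 - 2 * j) : ℤ) *
        ((chooseZ ((s : ℤ) + t + (n / 2 : ℕ) - 1 - j) ((n : ℤ) - 1) : ℤ)
          - (chooseZ ((s : ℤ) + (n / 2 : ℕ) - 1 - j) ((n : ℤ) - 1) : ℤ))
  else
    ∑ j ∈ Finset.range (i / 2 + 1),
      (chooseZ (n : ℤ) ((i : ℤ) - 2 * j) : ℤ) *
        ((chooseZ ((s : ℤ) + t + (n / 2 : ℕ) - 1 - j) ((n : ℤ) - 1) : ℤ)
          - (chooseZ ((s : ℤ) + (n / 2 : ℕ) - 1 - j) ((n : ℤ) - 1) : ℤ))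

/-- The constant part `p^c(n,s,t,i) = C(n-2, i)·C(n+s-i-2, n-2)`. -/
def pConst (n s t i : ℕ) : ℤ :=
  (chooseZ ((n : ℤ) - 2) (i : ℤ) : ℤ) * (chooseZ ((n : ℤ) + s - i - 2) ((n : ℤ) - 2) : ℤ)

/-- `p(n,s,t,i) = p⁺(n,s,t,i) - p⁻(n,s,t,i) + p^c(n,s,t,i)`, with `p(n,s,t,i) = 0` for
`i < 0`. -/
def pFun (n s t : ℕ) (i : ℤ) : ℤ :=
  if 0 ≤ i then pPlus n s t i.toNat - pMinus n s t i.toNat + pConst n s t i.toNat else 0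

/-- `p̿(n,s,t,i) = p(n,s,t,i) + 2·p(n,s,t,i-1) + p(n,s,t,i-2)`. -/
def pFunpp (n s t : ℕ) (i : ℤ) : ℤ :=
  pFun n s t i + 2 * pFun n s t (i - 1) + pFun n s t (i - 2)

namespace PAux

noncomputable def Z (a b : ℤ) : ℤ := (chooseZ a b : ℤ)

lemma Z_neg {a b : ℤ} (h : b < 0) : Z a b = 0 := by
  simp [Z, chooseZ]; omega

lemma Z_lt {a b : ℤ} (h : a < b) : Z a b = 0 := by
  simp [Z, chooseZ]; omega

lemma Z_self {a : ℤ} (h : 0 ≤ a) : Z a a = 1 := by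
  simp [Z, chooseZ, h]

lemma Z_zero {a : ℤ} (h : 0 ≤ a) : Z a 0 = 1 := by
  simp [Z, chooseZ, h]

lemma pascal {a b : ℤ} (hb : 1 ≤ b) : Z a b = Z (a-1) b + Z (a-1) (b-1) := by
  by_cases hab : b ≤ a
  · by_cases heq : b = a
    · subst heq
      rw [Z_self (by omega), Z_lt (by omega), Z_self (by omega)]; ring
    · have ha : 1 ≤ a := by omega
      simp only [Z, chooseZ]
      rw [if_pos ⟨by omega, hab⟩, if_pos ⟨by omega, by omega⟩, if_pos ⟨by omega, by omega⟩]
      have h1 : a.toNat = (a-1).toNat + 1 := by omega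
      have h2 : b.toNat = (b-1).toNat + 1 := by omega
      rw [h1, h2, Nat.choose_succ_succ']
      push_cast
      ring
  · rw [Z_lt (by omega), Z_lt (by omega), Z_lt (by omega)]
    simp

lemma pascal' (a b : ℤ) (hb : 1 ≤ b) : Z (a+1) b = Z a b + Z a (b-1) := by
  have h := pascal (a := a+1) hb
  rw [show (a+1-1 : ℤ) = a by ring] at h
  exact h

lemma vand {m : ℤ} (k : ℤ) (hm : 0 ≤ m) :
    Z (m+2) k = Z m k + 2 * Z m (k-1) + Z m (k-2) := by
  rcases lt_trichotomy k 0 with hk | hk | hk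
  · rw [Z_neg hk, Z_neg (by omega), Z_neg (by omega), Z_neg (by omega)]; ring
  · subst hk
    rw [Z_zero (by omega), Z_zero hm, Z_neg (by omega), Z_neg (by omega)]; ring
  · by_cases hk1 : k = 1
    · subst hk1
      have e1 := pascal' (m+1) 1 (by omega)
      have e2 := pascal' m 1 (by omega)
      rw [show (m+1+1 : ℤ) = m+2 by ring] at e1
      rw [show ((1:ℤ)-1) = 0 by ring] at e1 e2
      rw [e1, e2, Z_zero (show (0:ℤ) ≤ m+1 by omega), Z_zero hm, show ((1:ℤ)-1) = 0 by ring,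
        Z_zero hm, Z_neg (show (1:ℤ)-2 < 0 by omega)]
      ring
    · have e1 := pascal' (m+1) k (by omega)
      have e2 := pascal' m k (by omega)
      have e3 := pascal' m (k-1) (by omega)
      rw [show (m+1+1 : ℤ) = m+2 by ring] at e1
      rw [show (k-1-1 : ℤ) = k-2 by ring] at e3
      rw [e1, e2, e3]; ring

lemma hockey {k : ℤ} (hk : 0 ≤ k) (M : ℤ) :
    ∀ s : ℕ, ∑ ℓ ∈ Finset.range (s+1), Z (M+ℓ) k = Z (M+s+1) (k+1) - Z M (k+1) := by
  intro s
  induction s with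
  | zero =>
    rw [Finset.sum_range_one]
    have e := pascal' M (k+1) (by omega)
    rw [show (k+1-1 : ℤ) = k by ring] at e
    rw [show (M+((0:ℕ):ℤ)+1 : ℤ) = M+1 by push_cast; ring, e]
    push_cast; ring
  | succ m ih =>
    rw [Finset.sum_range_succ, ih]
    have e := pascal' (M+m+1) (k+1) (by omega)
    rw [show (k+1-1 : ℤ) = k by ring] at e
    rw [show (M+((m+1:ℕ):ℤ)+1 : ℤ) = M+(m:ℤ)+1+1 by push_cast; ring, e]
    push_cast; ring

noncomputable def csum (N n : ℕ) (i : ℤ) (f : ℤ → ℤ) : ℤ :=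
  ∑ j ∈ Finset.range N, Z n (i - 2*(j:ℤ)) * f (j:ℤ)

lemma csum_congr {N n : ℕ} {i : ℤ} {f g : ℤ → ℤ} (h : ∀ j : ℤ, 0 ≤ j → f j = g j) :
    csum N n i f = csum N n i g := by
  unfold csum
  exact Finset.sum_congr rfl fun j _ => by rw [h j (by positivity)]

lemma csum_add {N n : ℕ} {i : ℤ} (f g : ℤ → ℤ) :
    csum N n i (fun j => f j + g j) = csum N n i f + csum N n i g := by
  unfold csum
  rw [← Finset.sum_add_distrib]
  exact Finset.sum_congr rfl fun j _ => by ring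

lemma csum_sub {N n : ℕ} {i : ℤ} (f g : ℤ → ℤ) :
    csum N n i (fun j => f j - g j) = csum N n i f - csum N n i g := by
  unfold csum
  rw [← Finset.sum_sub_distrib]
  exact Finset.sum_congr rfl fun j _ => by ring

lemma csum_cmul {N n : ℕ} {i : ℤ} (c : ℤ) (f : ℤ → ℤ) :
    csum N n i (fun j => c * f j) = c * csum N n i f := by
  unfold csum
  rw [Finset.mul_sum]
  exact Finset.sum_congr rfl fun j _ => by ring

lemma csum_ext {M N n : ℕ} {i : ℤ} (f : ℤ → ℤ) (hMN : M ≤ N) (hM : i < 2*M) :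
    ∑ j ∈ Finset.range M, Z n (i - 2*(j:ℤ)) * f (j:ℤ) = csum N n i f := by
  unfold csum
  refine Finset.sum_subset (Finset.range_subset_range.2 hMN) fun j _ hj => ?_
  rw [Finset.mem_range, not_lt] at hj
  have hj' : (M:ℤ) ≤ (j:ℤ) := by exact_mod_cast hj
  rw [Z_neg (by omega), zero_mul]

lemma merge {N n' : ℕ} {i : ℤ} (f : ℤ → ℤ) :
    csum N n' i f + 2 * csum N n' (i-1) f + csum N n' (i-2) f = csum N (n'+2) i f := by
  unfold csum
  rw [Finset.mul_sum, ← Finset.sum_add_distrib, ← Finset.sum_add_distrib]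
  refine Finset.sum_congr rfl fun j _ => ?_
  have hv := vand (m := (n':ℤ)) (i - 2*(j:ℤ)) (by positivity)
  rw [show ((n':ℤ)+2) = ((n'+2:ℕ):ℤ) by push_cast; ring] at hv
  rw [hv, show (i-1-2*(j:ℤ)) = (i-2*(j:ℤ))-1 by ring, show (i-2-2*(j:ℤ)) = (i-2*(j:ℤ))-2 by ring]
  ring

lemma csum_shift {N n' : ℕ} {i : ℤ} (f : ℤ → ℤ) (hN : i < 2*N) :
    csum N n' (i-2) f = csum N n' i (fun j => f (j-1)) - Z n' i * f (-1) := by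
  set g : ℕ → ℤ := fun j => Z n' (i - 2*(j:ℤ)) * f ((j:ℤ) - 1) with hg
  have h1 : csum N n' (i-2) f = ∑ j ∈ Finset.range N, g (j+1) := by
    unfold csum
    refine Finset.sum_congr rfl fun j _ => ?_
    simp only [hg]
    congr 1
    · congr 1; push_cast; ring
    · congr 1; push_cast; ring
  have h2 := Finset.sum_range_succ' g N
  have h3 := Finset.sum_range_succ g N
  have hgN : g N = 0 := by
    simp only [hg]
    rw [Z_neg (by omega), zero_mul]
  have hg0 : g 0 = Z n' i * f (-1) := by
    simp only [hg]; norm_num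
  have h4 : csum N n' i (fun j => f (j-1)) = ∑ j ∈ Finset.range N, g j := rfl
  rw [h1, h4]
  linarith [h2, h3, hgN, hg0]


lemma shift {N n' : ℕ} {i : ℤ} (f : ℤ → ℤ) (hN : i < 2*N) :
    csum N n' i (fun j => f (j - i)) + 2 * csum N n' (i-1) (fun j => f (j - i + 1))
      + csum N n' (i-2) (fun j => f (j - i + 2))
    = csum N (n'+2) i (fun j => f (j - i + 1)) - Z n' i * (f (1 - i) - f (-i)) := by
  have h3 : csum N n' (i-2) (fun j => f (j - i + 2))
      = csum N n' i (fun j => f (j - i + 1)) - Z n' i * f (1 - i) := by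
    rw [csum_shift (fun j => f (j - i + 2)) hN]
    congr 1
    · exact csum_congr fun j _ => congrArg f (by ring)
    · congr 1; exact congrArg f (by ring)
  have h3' : csum N n' (i-2) (fun j => f (j - i + 1))
      = csum N n' i (fun j => f (j - i)) - Z n' i * f (-i) := by
    rw [csum_shift (fun j => f (j - i + 1)) hN]
    congr 1
    · exact csum_congr fun j _ => congrArg f (by ring)
    · congr 1; exact congrArg f (by ring)
  have hm := merge (N := N) (n' := n') (i := i) (fun j => f (j - i + 1))
  rw [h3, ← hm, h3']
  ring

example (a b c : ℤ) (h : Z (a + b) c = Z b c) : Z (b + a) c = Z b c := by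
  linear_combination (norm := ring_nf) h


def eps (n : ℕ) : ℤ := ((n % 2 : ℕ) : ℤ)
def kap (n : ℕ) : ℤ := ((n / 2 : ℕ) : ℤ)

lemma pPlus_eq (n s t i N : ℕ) (hN : i + 1 ≤ N) :
    pPlus n s t i = csum N n (i:ℤ)
      (fun j => Z ((n:ℤ)+s+t-1-i+j) ((n:ℤ)-1) - Z ((n:ℤ)+s-1-i+j) ((n:ℤ)-1)) := by
  unfold pPlus
  rw [← csum_ext (n := n)
    (fun j => Z ((n:ℤ)+s+t-1-i+j) ((n:ℤ)-1) - Z ((n:ℤ)+s-1-i+j) ((n:ℤ)-1))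
    (show i/2+1 ≤ N by omega) (show (i:ℤ) < 2*((i/2+1:ℕ):ℤ) by push_cast; omega)]
  rfl

lemma pMinus_eq (n s t i N : ℕ) (hN : i + 1 ≤ N) :
    pMinus n s t i = csum N n ((i:ℤ) - eps n)
      (fun j => Z ((s:ℤ)+t+kap n-1-j) ((n:ℤ)-1) - Z ((s:ℤ)+kap n-1-j) ((n:ℤ)-1)) := by
  unfold pMinus
  rcases Nat.even_or_odd n with he | ho
  · rw [if_neg (by simpa [Nat.odd_iff, Nat.even_iff] using he)]
    have heps : eps n = 0 := by
      unfold eps; rw [Nat.even_iff] at he; rw [he]; rfl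
    rw [heps, ← csum_ext (n := n)
      (fun j => Z ((s:ℤ)+t+kap n-1-j) ((n:ℤ)-1) - Z ((s:ℤ)+kap n-1-j) ((n:ℤ)-1))
      (show i/2+1 ≤ N by omega) (show (i:ℤ) - 0 < 2*((i/2+1:ℕ):ℤ) by push_cast; omega)]
    refine Finset.sum_congr rfl fun j _ => ?_
    norm_num [Z, kap]
  · rw [if_pos ho]
    have heps : eps n = 1 := by
      unfold eps; rw [Nat.odd_iff] at ho; rw [ho]; rfl
    rw [heps, ← csum_ext (n := n)
      (fun j => Z ((s:ℤ)+t+kap n-1-j) ((n:ℤ)-1) - Z ((s:ℤ)+kap n-1-j) ((n:ℤ)-1))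
      (show (i+1)/2 ≤ N by omega) (show (i:ℤ) - 1 < 2*(((i+1)/2:ℕ):ℤ) by push_cast; omega)]
    refine Finset.sum_congr rfl fun j _ => ?_
    norm_num [Z, kap]

lemma pConst_eq (n s t i : ℕ) :
    pConst n s t i = Z ((n:ℤ)-2) i * Z ((n:ℤ)+s-i-2) ((n:ℤ)-2) := rfl

lemma pFun_coe (n s t i : ℕ) :
    pFun n s t (i:ℤ) = pPlus n s t i - pMinus n s t i + pConst n s t i := by
  rw [pFun, if_pos (by positivity)]
  norm_num

lemma pFun_neg (n s t : ℕ) {i : ℤ} (h : i < 0) : pFun n s t i = 0 := by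
  rw [pFun, if_neg (by omega)]


lemma hP (n s t i : ℕ) (hn : 4 ≤ n) (ht : 1 ≤ t) :
    pPlus n s t i - pPlus n (s+1) (t-1) i
      = csum (i+1) n i (fun j => Z ((n:ℤ)+s-1-i+j) ((n:ℤ)-2)) := by
  rw [pPlus_eq n s t i (i+1) le_rfl, pPlus_eq n (s+1) (t-1) i (i+1) le_rfl, ← csum_sub]
  refine csum_congr fun j hj => ?_
  have hn' : (4:ℤ) ≤ (n:ℤ) := by exact_mod_cast hn
  have h1 := pascal (a := (n:ℤ)+s-i+j) (b := (n:ℤ)-1) (by omega)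
  have hts : ((t-1:ℕ):ℤ) = (t:ℤ)-1 := by omega
  have hss : ((s+1:ℕ):ℤ) = (s:ℤ)+1 := by omega
  show _ - _ = _
  rw [hts, hss]
  linear_combination (norm := ring_nf) h1

lemma hM (n s t i : ℕ) (hn : 4 ≤ n) (ht : 1 ≤ t) :
    pMinus n s t i - pMinus n (s+1) (t-1) i
      = csum (i+1) n ((i:ℤ) - eps n) (fun j => Z ((s:ℤ)+kap n-1-j) ((n:ℤ)-2)) := by
  rw [pMinus_eq n s t i (i+1) le_rfl, pMinus_eq n (s+1) (t-1) i (i+1) le_rfl, ← csum_sub]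
  refine csum_congr fun j hj => ?_
  have hn' : (4:ℤ) ≤ (n:ℤ) := by exact_mod_cast hn
  have h1 := pascal (a := (s:ℤ)+kap n-j) (b := (n:ℤ)-1) (by omega)
  have hts : ((t-1:ℕ):ℤ) = (t:ℤ)-1 := by omega
  have hss : ((s+1:ℕ):ℤ) = (s:ℤ)+1 := by omega
  show _ - _ = _
  rw [hts, hss]
  linear_combination (norm := ring_nf) h1

lemma hC (n s t i : ℕ) (hn : 4 ≤ n) :
    pConst n s t i - pConst n (s+1) (t-1) i
      = -(Z ((n:ℤ)-2) i * Z ((n:ℤ)+s-2-i) ((n:ℤ)-3)) := by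
  rw [pConst_eq, pConst_eq]
  have hn' : (4:ℤ) ≤ (n:ℤ) := by exact_mod_cast hn
  have h1 := pascal (a := (n:ℤ)+s-1-i) (b := (n:ℤ)-2) (by omega)
  have hss : ((s+1:ℕ):ℤ) = (s:ℤ)+1 := by omega
  rw [hss]
  linear_combination (norm := ring_nf) (-(Z ((n:ℤ)-2) i)) * h1

lemma C1 (n s t i : ℕ) (hn : 4 ≤ n) (ht : 1 ≤ t) :
    pFun n s t (i:ℤ) - pFun n (s+1) (t-1) (i:ℤ)
      = csum (i+1) n i (fun j => Z ((n:ℤ)+s-1-i+j) ((n:ℤ)-2))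
        - csum (i+1) n ((i:ℤ) - eps n) (fun j => Z ((s:ℤ)+kap n-1-j) ((n:ℤ)-2))
        - Z ((n:ℤ)-2) i * Z ((n:ℤ)+s-2-i) ((n:ℤ)-3) := by
  rw [pFun_coe, pFun_coe]
  linear_combination hP n s t i hn ht - hM n s t i hn ht + hC n s t i hn


noncomputable def QP (n s : ℕ) (i' : ℤ) (j : ℤ) : ℤ :=
  Z ((n:ℤ)-2+s-i'+j) ((n:ℤ)-2) - Z ((n:ℤ)-3-i'+j) ((n:ℤ)-2)
    - ((s:ℤ)+1) * Z ((n:ℤ)-3-i'+j) ((n:ℤ)-3)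

noncomputable def QM (n s : ℕ) (j : ℤ) : ℤ :=
  Z ((s:ℤ)+kap n-1-j) ((n:ℤ)-2) - Z (kap n-2-j) ((n:ℤ)-2)
    - ((s:ℤ)+1) * Z (kap n-2-j) ((n:ℤ)-3)

noncomputable def QZ (n s N : ℕ) (i' : ℤ) : ℤ :=
  csum N (n-2) i' (QP n s i') - csum N (n-2) (i' - eps n) (QM n s) + ((s:ℤ)+1) * Z 0 i'

lemma eps_sub (n : ℕ) (hn : 2 ≤ n) : eps (n-2) = eps n := by unfold eps; omega

lemma kap_sub (n : ℕ) (hn : 2 ≤ n) : kap (n-2) = kap n - 1 := by unfold kap; omega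

lemma pConst_top (n i' : ℕ) (hn : 4 ≤ n) (ℓ : ℕ) : (pConst (n-2) 0 ℓ i' : ℤ) = Z 0 i' := by
  rw [pConst_eq]
  have hc : (((n:ℕ)-2:ℕ):ℤ) = (n:ℤ)-2 := by omega
  rw [hc]
  rcases Nat.eq_zero_or_pos i' with h0 | h0
  · subst h0
    push_cast
    rw [show (n:ℤ)-2-2 = (n:ℤ)-4 by ring, show (n:ℤ)-2+0-0-2 = (n:ℤ)-4 by ring,
      Z_zero (show (0:ℤ) ≤ (n:ℤ)-4 by omega), Z_self (show (0:ℤ) ≤ (n:ℤ)-4 by omega),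
      Z_zero (le_refl (0:ℤ))]
    ring
  · have h1 : (0:ℤ) < (i':ℤ) := by exact_mod_cast h0
    have e2 : Z ((n:ℤ)-2+((0:ℕ):ℤ)-(i':ℤ)-2) ((n:ℤ)-2-2) = 0 := Z_lt (by push_cast; omega)
    rw [e2, Z_lt h1]
    ring


lemma Qbase (n i' N : ℕ) (hn : 4 ≤ n) (hN : i'+1 ≤ N) :
    pFun (n-2) 0 0 (i':ℤ) = QZ n 0 N i' := by
  have hc : (((n:ℕ)-2:ℕ):ℤ) = (n:ℤ)-2 := by omega
  have hn' : (4:ℤ) ≤ (n:ℤ) := by exact_mod_cast hn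
  have hkk : (2:ℤ) ≤ kap n := by unfold kap; omega
  rw [pFun_coe, pPlus_eq (n-2) 0 0 i' N hN, pMinus_eq (n-2) 0 0 i' N hN,
    pConst_top n i' hn 0, QZ, eps_sub n (by omega)]
  have hA : csum N (n-2) (i':ℤ)
      (fun j => Z ((((n:ℕ)-2:ℕ):ℤ)+((0:ℕ):ℤ)+((0:ℕ):ℤ)-1-(i':ℤ)+j) ((((n:ℕ)-2:ℕ):ℤ)-1)
        - Z ((((n:ℕ)-2:ℕ):ℤ)+((0:ℕ):ℤ)-1-(i':ℤ)+j) ((((n:ℕ)-2:ℕ):ℤ)-1))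
      = csum N (n-2) (i':ℤ) (QP n 0 (i':ℤ)) := by
    refine csum_congr fun j hj => ?_
    simp only [QP]
    rw [hc]
    have hp := pascal (a := (n:ℤ)-2-(i':ℤ)+j) (b := (n:ℤ)-2) (by omega)
    push_cast
    linear_combination (norm := ring_nf) -hp
  have hB : csum N (n-2) ((i':ℤ) - eps n)
      (fun j => Z (((0:ℕ):ℤ)+((0:ℕ):ℤ)+kap (n-2)-1-j) ((((n:ℕ)-2:ℕ):ℤ)-1)
        - Z (((0:ℕ):ℤ)+kap (n-2)-1-j) ((((n:ℕ)-2:ℕ):ℤ)-1))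
      = csum N (n-2) ((i':ℤ) - eps n) (QM n 0) := by
    refine csum_congr fun j hj => ?_
    simp only [QM]
    rw [hc, kap_sub n (by omega)]
    have hp := pascal (a := kap n - 1 - j) (b := (n:ℤ)-2) (by omega)
    push_cast
    linear_combination (norm := ring_nf) -hp
  rw [hA, hB]
  push_cast
  ring

lemma Qstep (n m i' N : ℕ) (hn : 4 ≤ n) (hN : i'+1 ≤ N) :
    pFun (n-2) 0 (m+1) (i':ℤ) = QZ n (m+1) N i' - QZ n m N i' := by
  have hc : (((n:ℕ)-2:ℕ):ℤ) = (n:ℤ)-2 := by omega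
  have hn' : (4:ℤ) ≤ (n:ℤ) := by exact_mod_cast hn
  have hkk : (2:ℤ) ≤ kap n := by unfold kap; omega
  rw [pFun_coe, pPlus_eq (n-2) 0 (m+1) i' N hN, pMinus_eq (n-2) 0 (m+1) i' N hN,
    pConst_top n i' hn (m+1), QZ, QZ, eps_sub n (by omega)]
  have hA : csum N (n-2) (i':ℤ)
      (fun j => Z ((((n:ℕ)-2:ℕ):ℤ)+((0:ℕ):ℤ)+(((m:ℕ)+1:ℕ):ℤ)-1-(i':ℤ)+j) ((((n:ℕ)-2:ℕ):ℤ)-1)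
        - Z ((((n:ℕ)-2:ℕ):ℤ)+((0:ℕ):ℤ)-1-(i':ℤ)+j) ((((n:ℕ)-2:ℕ):ℤ)-1))
      = csum N (n-2) (i':ℤ) (QP n (m+1) (i':ℤ)) - csum N (n-2) (i':ℤ) (QP n m (i':ℤ)) := by
    rw [← csum_sub]
    refine csum_congr fun j hj => ?_
    simp only [QP]
    rw [hc]
    have hp := pascal (a := (n:ℤ)-1+m-(i':ℤ)+j) (b := (n:ℤ)-2) (by omega)
    push_cast
    linear_combination (norm := ring_nf) -hp
  have hB : csum N (n-2) ((i':ℤ) - eps n)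
      (fun j => Z (((0:ℕ):ℤ)+(((m:ℕ)+1:ℕ):ℤ)+kap (n-2)-1-j) ((((n:ℕ)-2:ℕ):ℤ)-1)
        - Z (((0:ℕ):ℤ)+kap (n-2)-1-j) ((((n:ℕ)-2:ℕ):ℤ)-1))
      = csum N (n-2) ((i':ℤ) - eps n) (QM n (m+1)) - csum N (n-2) ((i':ℤ) - eps n) (QM n m) := by
    rw [← csum_sub]
    refine csum_congr fun j hj => ?_
    simp only [QM]
    rw [hc, kap_sub n (by omega)]
    have hp := pascal (a := (m:ℤ) + kap n - j) (b := (n:ℤ)-2) (by omega)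
    push_cast
    linear_combination (norm := ring_nf) -hp
  rw [hA, hB]
  push_cast
  ring

lemma SQ (n s i' N : ℕ) (hn : 4 ≤ n) (hN : i'+1 ≤ N) :
    ∑ ℓ ∈ Finset.range (s+1), pFun (n-2) 0 ℓ (i':ℤ) = QZ n s N i' := by
  induction s with
  | zero => rw [Finset.sum_range_one, Qbase n i' N hn hN]
  | succ m ih =>
    rw [Finset.sum_range_succ, ih, Qstep n m i' N hn hN]
    ring

lemma Z_one {a : ℤ} (h : 1 ≤ a) : Z a 1 = a := by
  unfold Z chooseZ
  rw [if_pos ⟨by omega, h⟩, show Int.toNat 1 = 1 from rfl, Nat.choose_one_right]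
  omega

lemma csum_neg {N n : ℕ} {i : ℤ} (f : ℤ → ℤ) (h : i < 0) : csum N n i f = 0 := by
  refine Finset.sum_eq_zero fun j _ => ?_
  have hj : (0:ℤ) ≤ (j:ℤ) := by positivity
  rw [Z_neg (by omega), zero_mul]

lemma eps_nonneg (n : ℕ) : 0 ≤ eps n := by unfold eps; positivity

lemma QZ_neg (n s N : ℕ) {i' : ℤ} (h : i' < 0) : QZ n s N i' = 0 := by
  have he := eps_nonneg n
  rw [QZ, csum_neg _ h, csum_neg _ (by omega), Z_neg h]
  ring

lemma SQZ (n s N : ℕ) (hn : 4 ≤ n) (i' : ℤ) (hN : i' < (N:ℤ)) :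
    ∑ ℓ ∈ Finset.range (s+1), pFun (n-2) 0 ℓ i' = QZ n s N i' := by
  rcases lt_or_ge i' 0 with h | h
  · rw [QZ_neg n s N h]
    exact Finset.sum_eq_zero fun ℓ _ => pFun_neg _ _ _ h
  · obtain ⟨m, rfl⟩ := Int.eq_ofNat_of_zero_le h
    exact SQ n s m N hn (by exact_mod_cast hN)

lemma E1tot (n i N : ℕ) (hn : 4 ≤ n) (hN : i+1 ≤ N) :
    csum N n (i:ℤ) (fun j => Z ((n:ℤ)-2-i+j) ((n:ℤ)-2))
      - Z ((n:ℤ)-2) (i:ℤ) * (Z ((n:ℤ)-2-i) ((n:ℤ)-2) - Z ((n:ℤ)-3-i) ((n:ℤ)-2)) = 0 := by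
  have hn' : (4:ℤ) ≤ (n:ℤ) := by exact_mod_cast hn
  have hz3 : Z ((n:ℤ)-3-i) ((n:ℤ)-2) = 0 := Z_lt (by omega)
  rcases Nat.eq_zero_or_pos i with h0 | h0
  · subst h0
    have hsum : csum N n ((0:ℕ):ℤ) (fun j => Z ((n:ℤ)-2-(0:ℕ)+j) ((n:ℤ)-2)) = 1 := by
      unfold csum
      rw [Finset.sum_eq_single_of_mem 0 (Finset.mem_range.2 (by omega))]
      · push_cast
        rw [show (n:ℤ)-2-0+0 = (n:ℤ)-2 by ring, Z_self (show (0:ℤ) ≤ (n:ℤ)-2 by omega),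
          Z_zero (show (0:ℤ) ≤ (n:ℤ) by omega)]
        ring
      · intro j _ hj
        have hj' : (1:ℤ) ≤ (j:ℤ) := by exact_mod_cast Nat.one_le_iff_ne_zero.2 hj
        rw [Z_neg (by push_cast; omega), zero_mul]
    rw [hsum, hz3]
    push_cast
    rw [show (n:ℤ)-2-0 = (n:ℤ)-2 by ring, Z_self (show (0:ℤ) ≤ (n:ℤ)-2 by omega),
      Z_zero (show (0:ℤ) ≤ (n:ℤ)-2 by omega)]
    ring
  · have h1 : (1:ℤ) ≤ (i:ℤ) := by exact_mod_cast h0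
    have hsum : csum N n (i:ℤ) (fun j => Z ((n:ℤ)-2-i+j) ((n:ℤ)-2)) = 0 := by
      refine Finset.sum_eq_zero fun j _ => ?_
      have hj : (0:ℤ) ≤ (j:ℤ) := by positivity
      beta_reduce
      rcases lt_or_ge ((i:ℤ)) (2*(j:ℤ)) with hc | hc
      · rw [Z_neg (by omega), zero_mul]
      · rw [show Z ((n:ℤ)-2-(i:ℤ)+(j:ℤ)) ((n:ℤ)-2) = 0 from Z_lt (by omega), mul_zero]
    rw [hsum, hz3, Z_lt (show (n:ℤ)-2-(i:ℤ) < (n:ℤ)-2 by omega)]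
    ring

lemma E2tot (n i N : ℕ) (hn : 4 ≤ n) (hN : i+1 ≤ N) :
    csum N n (i:ℤ) (fun j => Z ((n:ℤ)-2-i+j) ((n:ℤ)-3))
      - Z ((n:ℤ)-2) (i:ℤ) * (Z ((n:ℤ)-2-i) ((n:ℤ)-3) - Z ((n:ℤ)-3-i) ((n:ℤ)-3)) = Z 2 (i:ℤ) := by
  have hn' : (4:ℤ) ≤ (n:ℤ) := by exact_mod_cast hn
  match i, hN with
  | 0, hN =>
    have hsum : csum N n ((0:ℕ):ℤ) (fun j => Z ((n:ℤ)-2-((0:ℕ):ℤ)+j) ((n:ℤ)-3))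
        = Z ((n:ℤ)-2) ((n:ℤ)-3) := by
      unfold csum
      rw [Finset.sum_eq_single_of_mem 0 (Finset.mem_range.2 (by omega))]
      · push_cast
        rw [Z_zero (show (0:ℤ) ≤ (n:ℤ) by omega), show (n:ℤ)-2-0+0 = (n:ℤ)-2 by ring]
        ring
      · intro j _ hj
        have hj' : (1:ℤ) ≤ (j:ℤ) := by exact_mod_cast Nat.one_le_iff_ne_zero.2 hj
        rw [Z_neg (by push_cast; omega), zero_mul]
    rw [hsum]
    push_cast
    rw [show (n:ℤ)-2-0 = (n:ℤ)-2 by ring, show (n:ℤ)-3-0 = (n:ℤ)-3 by ring,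
      Z_zero (show (0:ℤ) ≤ (n:ℤ)-2 by omega), Z_self (show (0:ℤ) ≤ (n:ℤ)-3 by omega),
      Z_zero (show (0:ℤ) ≤ (2:ℤ) by omega)]
    ring
  | 1, hN =>
    have hsum : csum N n ((1:ℕ):ℤ) (fun j => Z ((n:ℤ)-2-((1:ℕ):ℤ)+j) ((n:ℤ)-3))
        = Z (n:ℤ) 1 := by
      unfold csum
      rw [Finset.sum_eq_single_of_mem 0 (Finset.mem_range.2 (by omega))]
      · push_cast
        rw [show (n:ℤ)-2-1+0 = (n:ℤ)-3 by ring, Z_self (show (0:ℤ) ≤ (n:ℤ)-3 by omega)]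
        ring
      · intro j _ hj
        have hj' : (1:ℤ) ≤ (j:ℤ) := by exact_mod_cast Nat.one_le_iff_ne_zero.2 hj
        rw [Z_neg (by push_cast; omega), zero_mul]
    rw [hsum]
    push_cast
    rw [show (n:ℤ)-2-1 = (n:ℤ)-3 by ring, Z_self (show (0:ℤ) ≤ (n:ℤ)-3 by omega),
      Z_lt (show (n:ℤ)-3-1 < (n:ℤ)-3 by omega),
      Z_one (show (1:ℤ) ≤ (n:ℤ) by omega), Z_one (show (1:ℤ) ≤ (n:ℤ)-2 by omega),
      Z_one (show (1:ℤ) ≤ (2:ℤ) by omega)]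
    ring
  | 2, hN =>
    have hsum : csum N n ((2:ℕ):ℤ) (fun j => Z ((n:ℤ)-2-((2:ℕ):ℤ)+j) ((n:ℤ)-3)) = 1 := by
      unfold csum
      rw [Finset.sum_eq_single_of_mem 1 (Finset.mem_range.2 (by omega))]
      · push_cast
        rw [Z_zero (show (0:ℤ) ≤ (n:ℤ) by omega), show (n:ℤ)-2-2+1 = (n:ℤ)-3 by ring,
          Z_self (show (0:ℤ) ≤ (n:ℤ)-3 by omega)]
        ring
      · intro j _ hj
        have hj0 : (0:ℤ) ≤ (j:ℤ) := by positivity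
        rcases Nat.lt_or_ge j 1 with hj1 | hj1
        · have : j = 0 := by omega
          subst this
          push_cast
          rw [show (n:ℤ)-2-2+0 = (n:ℤ)-4 by ring, Z_lt (show (n:ℤ)-4 < (n:ℤ)-3 by omega), mul_zero]
        · have hj' : (2:ℤ) ≤ (j:ℤ) := by exact_mod_cast (by omega : 2 ≤ j)
          rw [Z_neg (by push_cast; omega), zero_mul]
    rw [hsum]
    push_cast
    rw [Z_lt (show (n:ℤ)-2-2 < (n:ℤ)-3 by omega), Z_lt (show (n:ℤ)-3-2 < (n:ℤ)-3 by omega),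
      Z_self (show (0:ℤ) ≤ 2 by omega)]
    ring
  | (k+3), hN =>
    have hi : (3:ℤ) ≤ ((k+3:ℕ):ℤ) := by push_cast; omega
    have hsum : csum N n ((k+3:ℕ):ℤ) (fun j => Z ((n:ℤ)-2-((k+3:ℕ):ℤ)+j) ((n:ℤ)-3)) = 0 := by
      refine Finset.sum_eq_zero fun j _ => ?_
      have hj : (0:ℤ) ≤ (j:ℤ) := by positivity
      beta_reduce
      have hk3 : ((k+3:ℕ):ℤ) = (k:ℤ)+3 := by push_cast; ring
      rcases lt_or_ge (((k+3:ℕ):ℤ)) (2*(j:ℤ)) with hc | hc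
      · rw [Z_neg (by omega), zero_mul]
      · rw [show Z ((n:ℤ)-2-((k+3:ℕ):ℤ)+(j:ℤ)) ((n:ℤ)-3) = 0 from Z_lt (by omega), mul_zero]
    have hk3 : ((k+3:ℕ):ℤ) = (k:ℤ)+3 := by push_cast; ring
    rw [hsum, Z_lt (show (n:ℤ)-2-((k+3:ℕ):ℤ) < (n:ℤ)-3 by omega),
      Z_lt (show (n:ℤ)-3-((k+3:ℕ):ℤ) < (n:ℤ)-3 by omega),
      Z_lt (show (2:ℤ) < ((k+3:ℕ):ℤ) by omega)]
    ring


noncomputable def FP (n s : ℕ) (u : ℤ) : ℤ := Z ((n:ℤ)-2+s+u) ((n:ℤ)-2)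
noncomputable def F1 (n : ℕ) (u : ℤ) : ℤ := Z ((n:ℤ)-3+u) ((n:ℤ)-2)
noncomputable def F2 (n : ℕ) (u : ℤ) : ℤ := Z ((n:ℤ)-3+u) ((n:ℤ)-3)

lemma C3 (n s i N : ℕ) (hn : 4 ≤ n) (hN : i+1 ≤ N) :
    QZ n s N (i:ℤ) + 2 * QZ n s N ((i:ℤ)-1) + QZ n s N ((i:ℤ)-2)
      = csum N n (i:ℤ) (fun j => Z ((n:ℤ)+s-1-i+j) ((n:ℤ)-2))
        - csum N n ((i:ℤ) - eps n) (fun j => Z ((s:ℤ)+kap n-1-j) ((n:ℤ)-2))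
        - Z ((n:ℤ)-2) (i:ℤ) * Z ((n:ℤ)+s-2-i) ((n:ℤ)-3) := by
  have hc : (((n:ℕ)-2:ℕ):ℤ) = (n:ℤ)-2 := by omega
  have hn' : (4:ℤ) ≤ (n:ℤ) := by exact_mod_cast hn
  have hNZ : (i:ℤ) < 2*(N:ℤ) := by exact_mod_cast (by omega : (i:ℤ) < ((2*N:ℕ):ℤ))
  have hq0 : csum N (n-2) (i:ℤ) (QP n s (i:ℤ))
      = csum N (n-2) (i:ℤ) (fun j => FP n s (j - (i:ℤ)))
        - csum N (n-2) (i:ℤ) (fun j => F1 n (j - (i:ℤ)))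
        - ((s:ℤ)+1) * csum N (n-2) (i:ℤ) (fun j => F2 n (j - (i:ℤ))) := by
    rw [← csum_cmul, ← csum_sub, ← csum_sub]
    refine csum_congr fun j hj => ?_
    simp only [QP, FP, F1, F2]
    ring_nf
  have hq1 : csum N (n-2) ((i:ℤ)-1) (QP n s ((i:ℤ)-1))
      = csum N (n-2) ((i:ℤ)-1) (fun j => FP n s (j - (i:ℤ) + 1))
        - csum N (n-2) ((i:ℤ)-1) (fun j => F1 n (j - (i:ℤ) + 1))
        - ((s:ℤ)+1) * csum N (n-2) ((i:ℤ)-1) (fun j => F2 n (j - (i:ℤ) + 1)) := by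
    rw [← csum_cmul, ← csum_sub, ← csum_sub]
    refine csum_congr fun j hj => ?_
    simp only [QP, FP, F1, F2]
    ring_nf
  have hq2 : csum N (n-2) ((i:ℤ)-2) (QP n s ((i:ℤ)-2))
      = csum N (n-2) ((i:ℤ)-2) (fun j => FP n s (j - (i:ℤ) + 2))
        - csum N (n-2) ((i:ℤ)-2) (fun j => F1 n (j - (i:ℤ) + 2))
        - ((s:ℤ)+1) * csum N (n-2) ((i:ℤ)-2) (fun j => F2 n (j - (i:ℤ) + 2)) := by
    rw [← csum_cmul, ← csum_sub, ← csum_sub]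
    refine csum_congr fun j hj => ?_
    simp only [QP, FP, F1, F2]
    ring_nf
  have sP := shift (N := N) (n' := n-2) (f := FP n s) (i := (i:ℤ)) hNZ
  have s1 := shift (N := N) (n' := n-2) (f := F1 n) (i := (i:ℤ)) hNZ
  have s2 := shift (N := N) (n' := n-2) (f := F2 n) (i := (i:ℤ)) hNZ
  rw [show n-2+2 = n by omega, hc] at sP s1 s2
  have cP : csum N n (i:ℤ) (fun j => FP n s (j - (i:ℤ) + 1))
      = csum N n (i:ℤ) (fun j => Z ((n:ℤ)+s-1-i+j) ((n:ℤ)-2)) := by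
    refine csum_congr fun j hj => ?_
    simp only [FP]
    ring_nf
  have c1 : csum N n (i:ℤ) (fun j => F1 n (j - (i:ℤ) + 1))
      = csum N n (i:ℤ) (fun j => Z ((n:ℤ)-2-i+j) ((n:ℤ)-2)) := by
    refine csum_congr fun j hj => ?_
    simp only [F1]
    ring_nf
  have c2 : csum N n (i:ℤ) (fun j => F2 n (j - (i:ℤ) + 1))
      = csum N n (i:ℤ) (fun j => Z ((n:ℤ)-2-i+j) ((n:ℤ)-3)) := by
    refine csum_congr fun j hj => ?_
    simp only [F2]
    ring_nf
  have hE1 := E1tot n i N hn hN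
  have hE2 := E2tot n i N hn hN
  have pasc := pascal (a := (n:ℤ)-1+s-i) (b := (n:ℤ)-2) (by omega)
  have mM := merge (N := N) (n' := n-2) (i := (i:ℤ) - eps n) (QM n s)
  rw [show n-2+2 = n by omega] at mM
  have cM : csum N n ((i:ℤ) - eps n) (QM n s)
      = csum N n ((i:ℤ) - eps n) (fun j => Z ((s:ℤ)+kap n-1-j) ((n:ℤ)-2)) := by
    refine csum_congr fun j hj => ?_
    simp only [QM]
    rw [Z_lt (show kap n - 2 - j < (n:ℤ)-2 by unfold kap; omega),
      Z_lt (show kap n - 2 - j < (n:ℤ)-3 by unfold kap; omega)]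
    ring
  have v0 := vand (m := (0:ℤ)) ((i:ℤ)) le_rfl
  have u1 : FP n s (1-(i:ℤ)) = Z ((n:ℤ)+s-1-i) ((n:ℤ)-2) := by unfold FP; congr 1 <;> ring
  have u2 : FP n s (-(i:ℤ)) = Z ((n:ℤ)+s-2-i) ((n:ℤ)-2) := by unfold FP; congr 1 <;> ring
  have v1 : F1 n (1-(i:ℤ)) = Z ((n:ℤ)-2-i) ((n:ℤ)-2) := by unfold F1; congr 1 <;> ring
  have v2 : F1 n (-(i:ℤ)) = Z ((n:ℤ)-3-i) ((n:ℤ)-2) := by unfold F1; congr 1 <;> ring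
  have w1 : F2 n (1-(i:ℤ)) = Z ((n:ℤ)-2-i) ((n:ℤ)-3) := by unfold F2; congr 1 <;> ring
  have w2 : F2 n (-(i:ℤ)) = Z ((n:ℤ)-3-i) ((n:ℤ)-3) := by unfold F2; congr 1 <;> ring
  rw [cP] at sP
  rw [c1] at s1
  rw [c2] at s2
  rw [cM] at mM
  rw [show (i:ℤ) - eps n - 1 = (i:ℤ) - 1 - eps n by ring,
      show (i:ℤ) - eps n - 2 = (i:ℤ) - 2 - eps n by ring] at mM
  simp only [QZ]
  rw [hq0, hq1, hq2]
  set p0 := csum N (n-2) (i:ℤ) (fun j => FP n s (j - (i:ℤ))) with hsp0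
  set p1 := csum N (n-2) ((i:ℤ)-1) (fun j => FP n s (j - (i:ℤ) + 1)) with hsp1
  set p2 := csum N (n-2) ((i:ℤ)-2) (fun j => FP n s (j - (i:ℤ) + 2)) with hsp2
  set b0 := csum N (n-2) (i:ℤ) (fun j => F1 n (j - (i:ℤ))) with hsb0
  set b1 := csum N (n-2) ((i:ℤ)-1) (fun j => F1 n (j - (i:ℤ) + 1)) with hsb1
  set b2 := csum N (n-2) ((i:ℤ)-2) (fun j => F1 n (j - (i:ℤ) + 2)) with hsb2
  set d0 := csum N (n-2) (i:ℤ) (fun j => F2 n (j - (i:ℤ))) with hsd0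
  set d1 := csum N (n-2) ((i:ℤ)-1) (fun j => F2 n (j - (i:ℤ) + 1)) with hsd1
  set d2 := csum N (n-2) ((i:ℤ)-2) (fun j => F2 n (j - (i:ℤ) + 2)) with hsd2
  set a0 := csum N (n-2) ((i:ℤ) - eps n) (QM n s) with hsa0
  set a1 := csum N (n-2) ((i:ℤ) - 1 - eps n) (QM n s) with hsa1
  set a2 := csum N (n-2) ((i:ℤ) - 2 - eps n) (QM n s) with hsa2
  set t1 := csum N n (i:ℤ) (fun j => Z ((n:ℤ)+s-1-i+j) ((n:ℤ)-2)) with hst1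
  set t2 := csum N n ((i:ℤ) - eps n) (fun j => Z ((s:ℤ)+kap n-1-j) ((n:ℤ)-2)) with hst2
  set x1 := csum N n (i:ℤ) (fun j => Z ((n:ℤ)-2-i+j) ((n:ℤ)-2)) with hsx1
  set x2 := csum N n (i:ℤ) (fun j => Z ((n:ℤ)-2-i+j) ((n:ℤ)-3)) with hsx2
  linear_combination (norm := ring_nf) sP - s1 - ((s:ℤ)+1)*s2 - mM - hE1 - ((s:ℤ)+1)*hE2
    - Z ((n:ℤ)-2) (i:ℤ) * pasc - ((s:ℤ)+1)*v0
    - Z ((n:ℤ)-2) (i:ℤ) * u1 + Z ((n:ℤ)-2) (i:ℤ) * u2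
    + Z ((n:ℤ)-2) (i:ℤ) * v1 - Z ((n:ℤ)-2) (i:ℤ) * v2
    + ((s:ℤ)+1) * Z ((n:ℤ)-2) (i:ℤ) * w1 - ((s:ℤ)+1) * Z ((n:ℤ)-2) (i:ℤ) * w2

lemma ML (n s t i : ℕ) (hn : 4 ≤ n) (ht : 1 ≤ t) :
    pFun n s t (i:ℤ) - pFun n (s+1) (t-1) (i:ℤ)
      = ∑ ℓ ∈ Finset.range (s+1), pFunpp (n-2) 0 ℓ (i:ℤ) := by
  have hsum : ∑ ℓ ∈ Finset.range (s+1), pFunpp (n-2) 0 ℓ (i:ℤ)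
      = QZ n s (i+1) (i:ℤ) + 2 * QZ n s (i+1) ((i:ℤ)-1) + QZ n s (i+1) ((i:ℤ)-2) := by
    simp only [pFunpp]
    rw [Finset.sum_add_distrib, Finset.sum_add_distrib, ← Finset.mul_sum]
    rw [SQZ n s (i+1) hn (i:ℤ) (by push_cast; omega),
        SQZ n s (i+1) hn ((i:ℤ)-1) (by push_cast; omega),
        SQZ n s (i+1) hn ((i:ℤ)-2) (by push_cast; omega)]
  rw [hsum, C3 n s i (i+1) hn le_rfl, C1 n s t i hn ht]

lemma KEYp (n a b m : ℕ) (hb : 1 ≤ b) :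
    pPlus n a b m - pPlus n a (b-1) m = pPlus n 0 (a+b) m - pPlus n 0 (a+b-1) m := by
  rw [pPlus_eq n a b m (m+1) le_rfl, pPlus_eq n a (b-1) m (m+1) le_rfl,
      pPlus_eq n 0 (a+b) m (m+1) le_rfl, pPlus_eq n 0 (a+b-1) m (m+1) le_rfl,
      ← csum_sub, ← csum_sub]
  refine csum_congr fun j hj => ?_
  have h1 : ((b-1:ℕ):ℤ) = (b:ℤ)-1 := by omega
  have h2 : ((a+b:ℕ):ℤ) = (a:ℤ)+b := by omega
  have h3 : ((a+b-1:ℕ):ℤ) = (a:ℤ)+b-1 := by omega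
  rw [h1, h2, h3]
  push_cast
  ring_nf

lemma KEYm (n a b m : ℕ) (hb : 1 ≤ b) :
    pMinus n a b m - pMinus n a (b-1) m = pMinus n 0 (a+b) m - pMinus n 0 (a+b-1) m := by
  rw [pMinus_eq n a b m (m+1) le_rfl, pMinus_eq n a (b-1) m (m+1) le_rfl,
      pMinus_eq n 0 (a+b) m (m+1) le_rfl, pMinus_eq n 0 (a+b-1) m (m+1) le_rfl,
      ← csum_sub, ← csum_sub]
  refine csum_congr fun j hj => ?_
  have h1 : ((b-1:ℕ):ℤ) = (b:ℤ)-1 := by omega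
  have h2 : ((a+b:ℕ):ℤ) = (a:ℤ)+b := by omega
  have h3 : ((a+b-1:ℕ):ℤ) = (a:ℤ)+b-1 := by omega
  rw [h1, h2, h3]
  push_cast
  ring_nf

lemma KEY (n a b : ℕ) (hb : 1 ≤ b) (i' : ℤ) :
    pFun n a b i' - pFun n a (b-1) i' = pFun n 0 (a+b) i' - pFun n 0 (a+b-1) i' := by
  rcases lt_or_ge i' 0 with h | h
  · rw [pFun_neg _ _ _ h, pFun_neg _ _ _ h, pFun_neg _ _ _ h, pFun_neg _ _ _ h]
  · obtain ⟨m, rfl⟩ := Int.eq_ofNat_of_zero_le h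
    rw [pFun_coe, pFun_coe, pFun_coe, pFun_coe]
    have hcon : pConst n a b m = pConst n a (b-1) m := rfl
    have hcon2 : pConst n 0 (a+b) m = pConst n 0 (a+b-1) m := rfl
    linear_combination KEYp n a b m hb - KEYm n a b m hb + hcon - hcon2

lemma ppKEY (n ℓ t i : ℕ) (ht : 1 ≤ t) :
    pFunpp n ℓ t (i:ℤ) - pFunpp n ℓ (t-1) (i:ℤ)
      = pFunpp n 0 (t+ℓ) (i:ℤ) - pFunpp n 0 (t+ℓ-1) (i:ℤ) := by
  simp only [pFunpp]
  have k0 := KEY n ℓ t ht (i:ℤ)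
  have k1 := KEY n ℓ t ht ((i:ℤ)-1)
  have k2 := KEY n ℓ t ht ((i:ℤ)-2)
  rw [show ℓ+t = t+ℓ by omega] at k0 k1 k2
  linear_combination k0 + 2*k1 + k2

lemma tel (a : ℕ → ℤ) (t : ℕ) : ∀ m : ℕ,
    ∑ ℓ ∈ Finset.Icc 1 m, (a (t+ℓ) - a (t+ℓ-1)) = a (t+m) - a t := by
  intro m
  induction m with
  | zero => simp
  | succ k ih =>
    rw [Finset.sum_Icc_succ_top (by omega : 1 ≤ k+1), ih,
      show t+(k+1)-1 = t+k by omega]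
    ring

lemma ABEL (a : ℕ → ℤ) (t : ℕ) : ∀ m : ℕ,
    ∑ ℓ ∈ Finset.range (t+m+1), a ℓ
      = ∑ ℓ ∈ Finset.range t, a ℓ + ((m:ℤ)+1) * a t
        + ∑ ℓ ∈ Finset.Icc 1 m, ((m:ℤ)+1-ℓ) * (a (t+ℓ) - a (t+ℓ-1)) := by
  intro m
  induction m with
  | zero => simp [Finset.sum_range_succ]
  | succ k ih =>
    have hsp : ∀ ℓ ∈ Finset.Icc 1 k, (((k+1:ℕ):ℤ)+1-(ℓ:ℤ)) * (a (t+ℓ) - a (t+ℓ-1))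
        = ((k:ℤ)+1-(ℓ:ℤ)) * (a (t+ℓ) - a (t+ℓ-1)) + (a (t+ℓ) - a (t+ℓ-1)) := by
      intro ℓ _
      push_cast
      ring
    rw [show t+(k+1)+1 = (t+k+1)+1 by omega, Finset.sum_range_succ, ih,
      Finset.sum_Icc_succ_top (by omega : 1 ≤ k+1),
      Finset.sum_congr rfl hsp, Finset.sum_add_distrib, tel,
      show t+(k+1)-1 = t+k by omega, show t+(k+1) = t+k+1 by omega]
    push_cast
    ring

end PAux

open PAux

/-- For all `n ≥ 4`, `s ≥ 0`, `t ≥ 2` and `i ≥ 0`: if `s ≤ t` then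
`p(n,s,t,i) - p(n,s+1,t-1,i) = Σ_{ℓ=0}^{s} p̿(n-2,0,ℓ,i)`; and if `s ≥ t` then
`p(n,s,t,i) - p(n,s+1,t-1,i) = Σ_{ℓ=0}^{t-1} p̿(n-2,0,ℓ,i) + (s-t+1)·p̿(n-2,0,t,i)
  + Σ_{ℓ=1}^{s-t} (s-t+1-ℓ)·[p̿(n-2,ℓ,t,i) - p̿(n-2,ℓ,t-1,i)]`. -/
theorem p_self_recurrence (n s t : ℕ) (hn : 4 ≤ n) (ht : 2 ≤ t) (i : ℕ) :
    (s ≤ t →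
      pFun n s t (i : ℤ) - pFun n (s + 1) (t - 1) (i : ℤ)
        = ∑ ℓ ∈ Finset.range (s + 1), pFunpp (n - 2) 0 ℓ (i : ℤ)) ∧
    (t ≤ s →
      pFun n s t (i : ℤ) - pFun n (s + 1) (t - 1) (i : ℤ)
        = ∑ ℓ ∈ Finset.range t, pFunpp (n - 2) 0 ℓ (i : ℤ)
        + ((s : ℤ) - t + 1) * pFunpp (n - 2) 0 t (i : ℤ)
        + ∑ ℓ ∈ Finset.Icc 1 (s - t),
            ((s : ℤ) - t + 1 - ℓ) *
              (pFunpp (n - 2) ℓ t (i : ℤ) - pFunpp (n - 2) ℓ (t - 1) (i : ℤ))) := by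
  constructor
  · intro _
    exact ML n s t i hn (by omega)
  · intro hts
    rw [ML n s t i hn (by omega)]
    have hstep : ∀ ℓ ∈ Finset.Icc 1 (s-t),
        ((s:ℤ) - t + 1 - (ℓ:ℤ)) * (pFunpp (n-2) ℓ t (i:ℤ) - pFunpp (n-2) ℓ (t-1) (i:ℤ))
          = (((s-t:ℕ):ℤ)+1-(ℓ:ℤ)) * (pFunpp (n-2) 0 (t+ℓ) (i:ℤ) - pFunpp (n-2) 0 (t+ℓ-1) (i:ℤ)) := by
      intro ℓ _
      rw [ppKEY (n-2) ℓ t i (by omega)]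
      congr 1
      omega
    rw [Finset.sum_congr rfl hstep]
    have habel := ABEL (fun u => pFunpp (n-2) 0 u (i:ℤ)) t (s-t)
    beta_reduce at habel
    rw [show t+(s-t)+1 = s+1 by omega] at habel
    rw [habel, show (((s-t:ℕ)):ℤ) = (s:ℤ)-t by omega]
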